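/- For the stress-tensor form of the viscous operator with constant viscosity μ₀, the Fourier symbol of the Schur complement is 2μ₀: with L̂_μ = μ₀ [[2d̂_x² + d̂_y², d̂_x d̂_y], [d̂_x d̂_y, d̂_x² + 2d̂_y²]], D̂ = [d̂_x, d̂_y], Ĝ = [d̂_x, d̂_y]^T, and assuming L̂_μ is invertible and d̂_x² + d̂_y² ≠ 0, one has (D̂ L̂_μ^{-1} Ĝ)^{-1} = 2μ₀. -/

import Mathlib

open Matrix

theorem stmt_13 (dx dy : ℂ) (hd : dx ^ 2 + dy ^ 2 ≠ 0)
    (μ₀ : ℝ) (hμ : μ₀ ≠ 0)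
    (Dh : Matrix (Fin 1) (Fin 2) ℂ) (hD : Dh = !![dx, dy])
    (Gh : Matrix (Fin 2) (Fin 1) ℂ) (hG : Gh = !![dx; dy])
    (Lh : Matrix (Fin 2) (Fin 2) ℂ)
    (hL : Lh = (μ₀ : ℂ) • !![2 * dx ^ 2 + dy ^ 2, dx * dy;
                             dx * dy, dx ^ 2 + 2 * dy ^ 2])
    (hLinv : IsUnit Lh.det) :
    (Dh * Lh⁻¹ * Gh)⁻¹ = (2 * μ₀ : ℂ) • (1 : Matrix (Fin 1) (Fin 1) ℂ) := by
  have hμ' : (μ₀ : ℂ) ≠ 0 := by exact_mod_cast hμ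
  have hden : dx ^ 2 * (μ₀:ℂ) ^ 2 * dy ^ 2 * 4 + dx ^ 4 * (μ₀:ℂ) ^ 2 * 2 +
      (μ₀:ℂ) ^ 2 * dy ^ 4 * 2 ≠ 0 := by
    have h1 : dx ^ 2 * (μ₀:ℂ) ^ 2 * dy ^ 2 * 4 + dx ^ 4 * (μ₀:ℂ) ^ 2 * 2 +
        (μ₀:ℂ) ^ 2 * dy ^ 4 * 2 = 2 * (μ₀:ℂ) ^ 2 * (dx ^ 2 + dy ^ 2) ^ 2 := by ring
    rw [h1]
    exact mul_ne_zero (mul_ne_zero two_ne_zero (pow_ne_zero 2 hμ')) (pow_ne_zero 2 hd)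
  have key : Dh * Lh⁻¹ * Gh = (2 * (μ₀ : ℂ))⁻¹ • (1 : Matrix (Fin 1) (Fin 1) ℂ) := by
    rw [Matrix.inv_def]
    subst hD hG hL
    ext i j
    fin_cases i; fin_cases j
    simp [Matrix.adjugate_fin_two, Matrix.det_fin_two, Matrix.mul_apply,
      Fin.sum_univ_two, Matrix.smul_apply]
    field_simp
    ring_nf
    field_simp [hden]
    have hX : dx ^ 2 * (dy ^ 2 * 4 + dx ^ 2 * 2) + dy ^ 4 * 2 ≠ 0 := by
      have h2 : dx ^ 2 * (dy ^ 2 * 4 + dx ^ 2 * 2) + dy ^ 4 * 2 = 2 * (dx ^ 2 + dy ^ 2) ^ 2 := by ring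
      rw [h2]; exact mul_ne_zero two_ne_zero (pow_ne_zero 2 hd)
    exact div_self hX

  rw [key]
  rw [Matrix.inv_def]
  simp [Matrix.det_fin_one, Matrix.smul_apply, Matrix.adjugate_fin_one]
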